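/- Let W be a symmetric d×d matrix with eigenvalues λ₁ ≥ ... ≥ λ_d, let ε ∈ (0, 1/2), and suppose unit vectors u₁, u_d satisfy ⟨Wu₁, u₁⟩ ≥ λ₁ − ε(λ₁ − λ_d) and ⟨Wu_d, u_d⟩ ≤ λ_d + ε(λ₁ − λ_d). Set λ̂₁ = ⟨Wu₁,u₁⟩, λ̂_d = ⟨Wu_d,u_d⟩, and γ = max{λ̂₁, −λ̂_d}. Then ‖W‖_op ≤ γ/(1 − 2ε). -/

import Mathlib

open scoped RealInnerProductSpace

/-- The operator (spectral) norm of a real matrix, via its action on Euclidean space. -/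
noncomputable def matrixOpNorm {d : ℕ} (W : Matrix (Fin d) (Fin d) ℝ) : ℝ :=
  ‖Matrix.toEuclideanCLM (𝕜 := ℝ) W‖

/-- A self-adjoint operator whose quadratic form is bounded by `C‖v‖²` has norm at most `C`. -/
lemma opNorm_le_of_quadratic {E : Type*} [NormedAddCommGroup E] [InnerProductSpace ℝ E]
    (T : E →L[ℝ] E) (hsym : ∀ x y : E, ⟪T x, y⟫ = ⟪x, T y⟫) (C : ℝ) (hC0 : 0 ≤ C)
    (h : ∀ v : E, |⟪T v, v⟫| ≤ C * ‖v‖ ^ 2) : ‖T‖ ≤ C := by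
  refine ContinuousLinearMap.opNorm_le_bound _ hC0 fun x => ?_
  rcases eq_or_ne (T x) 0 with h0 | h0
  · simp [h0]
    positivity
  have hTx : (0 : ℝ) < ‖T x‖ := norm_pos_iff.mpr h0
  set y : E := (‖x‖ / ‖T x‖) • T x with hy
  have hny : ‖y‖ = ‖x‖ := by
    rw [hy, norm_smul, Real.norm_eq_abs, abs_of_nonneg (by positivity)]
    field_simp
  have hinner : ⟪T x, y⟫ = ‖x‖ * ‖T x‖ := by
    rw [hy, real_inner_smul_right, real_inner_self_eq_norm_sq]
    field_simp
  -- polarization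
  have hpol : 4 * ⟪T x, y⟫ = ⟪T (x + y), x + y⟫ - ⟪T (x - y), x - y⟫ := by
    have h1 : ⟪T y, x⟫ = ⟪T x, y⟫ := by
      rw [hsym y x, real_inner_comm]
    simp only [map_add, map_sub, inner_add_left, inner_add_right, inner_sub_left,
      inner_sub_right]
    linarith
  have hb1 := h (x + y)
  have hb2 := h (x - y)
  have hpar : ‖x + y‖ ^ 2 + ‖x - y‖ ^ 2 = 2 * (‖x‖ ^ 2 + ‖y‖ ^ 2) := by
    have := norm_add_sq_real x y
    have := norm_sub_sq_real x y
    linarith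
  have key : 4 * (‖x‖ * ‖T x‖) ≤ 4 * (C * ‖x‖ ^ 2) := by
    rw [← hinner]
    have := abs_le.1 hb1
    have := abs_le.1 hb2
    have : 4 * ⟪T x, y⟫ ≤ C * ‖x + y‖ ^ 2 + C * ‖x - y‖ ^ 2 := by linarith
    calc 4 * ⟪T x, y⟫ ≤ C * (‖x + y‖ ^ 2 + ‖x - y‖ ^ 2) := by linarith
      _ = C * (2 * (‖x‖ ^ 2 + ‖y‖ ^ 2)) := by rw [hpar]
      _ = 4 * (C * ‖x‖ ^ 2) := by rw [hny]; ring
  have hx : (0 : ℝ) ≤ ‖x‖ := norm_nonneg x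
  rcases eq_or_lt_of_le hx with h0x | h0x
  · exfalso
    have : T x = 0 := by
      have hx0 : x = 0 := by rwa [eq_comm, norm_eq_zero] at h0x
      simp [hx0]
    exact h0 this
  · have : ‖x‖ * ‖T x‖ ≤ C * ‖x‖ ^ 2 := by linarith
    calc ‖T x‖ = (‖x‖ * ‖T x‖) / ‖x‖ := by field_simp
      _ ≤ (C * ‖x‖ ^ 2) / ‖x‖ := by gcongr
      _ = C * ‖x‖ := by field_simp

/-- Approximate extreme eigenvectors certify the spectral norm bound
`‖W‖_op ≤ γ/(1 − 2ε)`. -/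
theorem approx_extreme_eigenvectors_opnorm_bound {d : ℕ}
    (W : Matrix (Fin d) (Fin d) ℝ) (hW : W.IsSymm)
    (l1 ld ε : ℝ) (hε0 : 0 < ε) (hε1 : ε < 1 / 2)
    (hub : ∀ v : EuclideanSpace ℝ (Fin d),
      ⟪(show EuclideanSpace ℝ (Fin d) from WithLp.toLp 2 (W.mulVec v)), v⟫ ≤ l1 * ‖v‖ ^ 2)
    (hlb : ∀ v : EuclideanSpace ℝ (Fin d),
      ld * ‖v‖ ^ 2 ≤ ⟪(show EuclideanSpace ℝ (Fin d) from WithLp.toLp 2 (W.mulVec v)), v⟫)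
    (u1 ud : EuclideanSpace ℝ (Fin d)) (hu1 : ‖u1‖ = 1) (hud : ‖ud‖ = 1)
    (h1 : ⟪(show EuclideanSpace ℝ (Fin d) from WithLp.toLp 2 (W.mulVec u1)), u1⟫ ≥ l1 - ε * (l1 - ld))
    (hd : ⟪(show EuclideanSpace ℝ (Fin d) from WithLp.toLp 2 (W.mulVec ud)), ud⟫ ≤ ld + ε * (l1 - ld))
    (γ : ℝ)
    (hγ : γ = max ⟪(show EuclideanSpace ℝ (Fin d) from WithLp.toLp 2 (W.mulVec u1)), u1⟫
      (-⟪(show EuclideanSpace ℝ (Fin d) from WithLp.toLp 2 (W.mulVec ud)), ud⟫)) :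
    matrixOpNorm W ≤ γ / (1 - 2 * ε) := by
  set T := Matrix.toEuclideanCLM (𝕜 := ℝ) W with hT
  have hTv : ∀ v : EuclideanSpace ℝ (Fin d),
      T v = (show EuclideanSpace ℝ (Fin d) from WithLp.toLp 2 (W.mulVec v)) := fun v => rfl
  -- symmetry
  have hherm : W.IsHermitian := by
    rw [Matrix.IsHermitian, Matrix.conjTranspose_eq_transpose_of_trivial]
    exact hW
  have hsymm : LinearMap.IsSymmetric (Matrix.toEuclideanLin W) :=
    Matrix.isHermitian_iff_isSymmetric.mp hherm
  have hsym : ∀ x y : EuclideanSpace ℝ (Fin d), ⟪T x, y⟫ = ⟪x, T y⟫ := by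
    intro x y
    exact hsymm x y
  set a := ⟪(show EuclideanSpace ℝ (Fin d) from WithLp.toLp 2 (W.mulVec u1)), u1⟫ with ha
  set b := ⟪(show EuclideanSpace ℝ (Fin d) from WithLp.toLp 2 (W.mulVec ud)), ud⟫ with hb
  have hau := hub u1
  have hbu := hlb u1
  rw [hu1] at hau hbu
  simp only [one_pow, mul_one] at hau hbu
  have had := hub ud
  have hbd := hlb ud
  rw [hud] at had hbd
  simp only [one_pow, mul_one] at had hbd
  have hs : 0 ≤ l1 - ld := by linarith
  have hden : (0 : ℝ) < 1 - 2 * ε := by linarith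
  have hgap : (1 - 2 * ε) * (l1 - ld) ≤ a - b := by nlinarith
  have haγ : a ≤ γ := by rw [hγ]; exact le_max_left _ _
  have hbγ : -b ≤ γ := by rw [hγ]; exact le_max_right _ _
  have hγ0 : 0 ≤ γ := by nlinarith
  set C := γ / (1 - 2 * ε) with hC
  have hC0 : 0 ≤ C := div_nonneg hγ0 (le_of_lt hden)
  have hl1C : l1 ≤ C := by
    rw [hC, le_div_iff₀ hden]
    nlinarith
  have hldC : -ld ≤ C := by
    rw [hC, le_div_iff₀ hden]
    nlinarith
  have hq : ∀ v : EuclideanSpace ℝ (Fin d), |⟪T v, v⟫| ≤ C * ‖v‖ ^ 2 := by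
    intro v
    rw [hTv v]
    rw [abs_le]
    constructor
    · have := hlb v
      nlinarith [sq_nonneg ‖v‖]
    · have := hub v
      nlinarith [sq_nonneg ‖v‖]
  exact opNorm_le_of_quadratic T hsym C hC0 hq
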